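/- Fix real numbers α, η, β with 1 < α < η < β, and real numbers N > 0, A ≠ 0, B > 0. Then the system φ_c(t) = 0 and φ_c′(t) = 0 has exactly one solution (t, c) ∈ (0,∞) × ℝ, namely t₀ = (N/B)^{1/(β−η)} and c₀ = ((β−η)/(ηβ)) · N^{β/(β−η)}/B^{η/(β−η)}; in particular c₀ > 0. Moreover, for every c ∈ ℝ one has φ_c(t₀) = α(c₀ − c)/(t₀^α · A). -/

import Mathlib

/-- The fibering map `φ_c(t) = ((t^η/η)N − (t^β/β)B − c)/((t^α/α)A)` on `(0,∞)`. -/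
noncomputable def fib (α η β N A B c : ℝ) : ℝ → ℝ :=
  fun t => ((t ^ η / η) * N - (t ^ β / β) * B - c) / ((t ^ α / α) * A)

lemma fib_deriv (α η β N A B c t : ℝ) (hα : α ≠ 0) (hη : η ≠ 0) (hβ : β ≠ 0)
    (hA : A ≠ 0) (ht : 0 < t) :
    deriv (fib α η β N A B c) t =
      ((t ^ (η - 1) * N - t ^ (β - 1) * B) * (t ^ α / α * A)
        - (t ^ η / η * N - t ^ β / β * B - c) * (t ^ (α - 1) * A)) / (t ^ α / α * A) ^ 2 := by
  have hden : t ^ α / α * A ≠ 0 :=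
    mul_ne_zero (div_ne_zero (Real.rpow_pos_of_pos ht α).ne' hα) hA
  have hd1 : HasDerivAt (fun t : ℝ => t ^ η) (η * t ^ (η - 1)) t :=
    Real.hasDerivAt_rpow_const (Or.inl ht.ne')
  have hd2 : HasDerivAt (fun t : ℝ => t ^ β) (β * t ^ (β - 1)) t :=
    Real.hasDerivAt_rpow_const (Or.inl ht.ne')
  have hd3 : HasDerivAt (fun t : ℝ => t ^ α) (α * t ^ (α - 1)) t :=
    Real.hasDerivAt_rpow_const (Or.inl ht.ne')
  have hnum : HasDerivAt (fun t : ℝ => t ^ η / η * N - t ^ β / β * B - c)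
      (t ^ (η - 1) * N - t ^ (β - 1) * B) t := by
    have h := (((hd1.div_const η).mul_const N).sub ((hd2.div_const β).mul_const B)).sub_const c
    rw [mul_div_cancel_left₀ _ hη, mul_div_cancel_left₀ _ hβ] at h
    exact h
  have hdenD : HasDerivAt (fun t : ℝ => t ^ α / α * A) (t ^ (α - 1) * A) t := by
    have h := (hd3.div_const α).mul_const A
    rw [mul_div_cancel_left₀ _ hα] at h
    exact h
  exact (hnum.div hdenD hden).deriv

/-- For `N > 0`, `A ≠ 0`, `B > 0`, the system `φ_c(t) = 0 = φ_c′(t)`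
has exactly one solution `(t, c) ∈ (0,∞) × ℝ`, namely `t₀ = (N/B)^{1/(β−η)}` and
`c₀ = ((β−η)/(ηβ))·N^{β/(β−η)}/B^{η/(β−η)} > 0`; moreover
`φ_c(t₀) = α(c₀ − c)/(t₀^α A)` for every `c`. -/
theorem stmt11 (α η β N A B : ℝ) (h1 : 1 < α) (h2 : α < η) (h3 : η < β)
    (hN : 0 < N) (hA : A ≠ 0) (hB : 0 < B) :
    (0 < (N / B) ^ ((1 : ℝ) / (β - η)) ∧
      fib α η β N A B ((β - η) / (η * β) * (N ^ (β / (β - η)) / B ^ (η / (β - η))))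
        ((N / B) ^ ((1 : ℝ) / (β - η))) = 0 ∧
      deriv (fib α η β N A B ((β - η) / (η * β) * (N ^ (β / (β - η)) / B ^ (η / (β - η)))))
        ((N / B) ^ ((1 : ℝ) / (β - η))) = 0) ∧
    (∀ c t : ℝ, 0 < t → fib α η β N A B c t = 0 → deriv (fib α η β N A B c) t = 0 →
      t = (N / B) ^ ((1 : ℝ) / (β - η)) ∧
      c = (β - η) / (η * β) * (N ^ (β / (β - η)) / B ^ (η / (β - η)))) ∧
    0 < (β - η) / (η * β) * (N ^ (β / (β - η)) / B ^ (η / (β - η))) ∧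
    (∀ c : ℝ, fib α η β N A B c ((N / B) ^ ((1 : ℝ) / (β - η))) =
      α * ((β - η) / (η * β) * (N ^ (β / (β - η)) / B ^ (η / (β - η))) - c) /
        (((N / B) ^ ((1 : ℝ) / (β - η))) ^ α * A)) := by
  have hα0 : α ≠ 0 := by linarith
  have hη0 : η ≠ 0 := by linarith
  have hβ0 : β ≠ 0 := by linarith
  have hs : (0:ℝ) < β - η := by linarith
  have hNB : (0:ℝ) < N / B := div_pos hN hB
  set s : ℝ := β - η with hsdef
  set t0 : ℝ := (N / B) ^ ((1:ℝ) / s) with ht0def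
  set K : ℝ := N ^ (β / s) / B ^ (η / s) with hKdef
  set c0 : ℝ := s / (η * β) * K with hc0def
  have ht0 : 0 < t0 := Real.rpow_pos_of_pos hNB _
  have hK : 0 < K := div_pos (Real.rpow_pos_of_pos hN _) (Real.rpow_pos_of_pos hB _)
  -- t0 ^ x expressions
  have ht0pow : ∀ x : ℝ, t0 ^ x = (N / B) ^ (x / s) := by
    intro x
    rw [ht0def, ← Real.rpow_mul hNB.le]
    congr 1
    field_simp
  have hβη : β / s = η / s + 1 := by field_simp; ring
  have e1 : t0 ^ η * N = K := by
    rw [ht0pow, Real.div_rpow hN.le hB.le, hKdef, hβη, Real.rpow_add_one hN.ne']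
    field_simp
  have e2 : t0 ^ β * B = K := by
    rw [ht0pow, Real.div_rpow hN.le hB.le, hKdef, hβη, Real.rpow_add_one hB.ne']
    field_simp
  -- numerator at t0, c0 vanishes
  have hnum0 : t0 ^ η / η * N - t0 ^ β / β * B - c0 = 0 := by
    have h1' : t0 ^ η / η * N = K / η := by rw [div_mul_eq_mul_div, e1]
    have h2' : t0 ^ β / β * B = K / β := by rw [div_mul_eq_mul_div, e2]
    rw [h1', h2', hc0def, hsdef]
    field_simp
    ring
  have hden0 : ∀ t : ℝ, 0 < t → t ^ α / α * A ≠ 0 := fun t ht =>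
    mul_ne_zero (div_ne_zero (Real.rpow_pos_of_pos ht α).ne' hα0) hA
  -- g'(t0) = 0
  have hg'0 : t0 ^ (η - 1) * N - t0 ^ (β - 1) * B = 0 := by
    have hb : t0 ^ (β - 1) = t0 ^ (η - 1) * t0 ^ s := by
      rw [← Real.rpow_add ht0]; congr 1; rw [hsdef]; ring
    have hts : t0 ^ s * B = N := by
      rw [ht0pow, div_self hs.ne', Real.rpow_one, div_mul_cancel₀ _ hB.ne']
    rw [hb, mul_assoc, hts]
    ring
  refine ⟨⟨ht0, ?_, ?_⟩, ?_, ?_, ?_⟩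
  · -- fib c0 t0 = 0
    show (t0 ^ η / η * N - t0 ^ β / β * B - c0) / (t0 ^ α / α * A) = 0
    rw [hnum0, zero_div]
  · -- deriv = 0 at t0
    rw [fib_deriv α η β N A B c0 t0 hα0 hη0 hβ0 hA ht0, hnum0, hg'0]
    simp
  · -- uniqueness
    intro c t ht hfib hder
    have hnum : t ^ η / η * N - t ^ β / β * B - c = 0 := by
      have := hfib
      unfold fib at this
      rcases div_eq_zero_iff.mp this with h | h
      · exact h
      · exact absurd h (hden0 t ht)
    rw [fib_deriv α η β N A B c t hα0 hη0 hβ0 hA ht, hnum] at hder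
    have hder' : (t ^ (η - 1) * N - t ^ (β - 1) * B) * (t ^ α / α * A) = 0 := by
      have h2sq : (t ^ α / α * A) ^ 2 ≠ 0 := pow_ne_zero _ (hden0 t ht)
      have := div_eq_zero_iff.mp hder
      rcases this with h | h
      · linarith [h]
      · exact absurd h h2sq
    have hg' : t ^ (η - 1) * N - t ^ (β - 1) * B = 0 :=
      (mul_eq_zero.mp hder').resolve_right (hden0 t ht)
    -- derive t ^ s = N / B
    have hb : t ^ (β - 1) = t ^ (η - 1) * t ^ s := by
      rw [← Real.rpow_add ht]; congr 1; rw [hsdef]; ring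
    have hNts : N = t ^ s * B := by
      have hpos : (0:ℝ) < t ^ (η - 1) := Real.rpow_pos_of_pos ht _
      have : t ^ (η - 1) * N = t ^ (η - 1) * (t ^ s * B) := by
        rw [hb] at hg'; nlinarith [hg']
      exact mul_left_cancel₀ hpos.ne' this
    have hts : t ^ s = N / B := by rw [hNts, mul_div_cancel_right₀ _ hB.ne']
    have hteq : t = t0 := by
      rw [ht0def, ← hts, ← Real.rpow_mul ht.le, mul_one_div, div_self hs.ne',
        Real.rpow_one]
    refine ⟨hteq, ?_⟩
    have : c = t ^ η / η * N - t ^ β / β * B := by linarith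
    rw [this, hteq]
    have h1' : t0 ^ η / η * N = K / η := by rw [div_mul_eq_mul_div, e1]
    have h2' : t0 ^ β / β * B = K / β := by rw [div_mul_eq_mul_div, e2]
    rw [h1', h2', hc0def, hsdef]
    field_simp
  · -- c0 > 0
    exact mul_pos (div_pos hs (mul_pos (by linarith) (by linarith))) hK
  · -- formula for fib c t0
    intro c
    show (t0 ^ η / η * N - t0 ^ β / β * B - c) / (t0 ^ α / α * A) =
      α * (c0 - c) / (t0 ^ α * A)
    have h1' : t0 ^ η / η * N = K / η := by rw [div_mul_eq_mul_div, e1]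
    have h2' : t0 ^ β / β * B = K / β := by rw [div_mul_eq_mul_div, e2]
    have hc0' : K / η - K / β = c0 := by rw [hc0def, hsdef]; field_simp
    rw [h1', h2']
    have : K / η - K / β - c = c0 - c := by rw [hc0']
    rw [this]
    have htα : (0:ℝ) < t0 ^ α := Real.rpow_pos_of_pos ht0 _
    field_simp
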